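/- For the curvature R_{ab} = k_a k_b α_c θ̃^c ∧ k♭ + 2 V_{c[a} k_{b]} θ̃^c ∧ k♭ of the restricted connection, the traces satisfy: the (0,4) component tensor obeys R_{acb}{}^c = V k_a k_b and R_{ac}{}^c{}_b = -V k_a k_b where V = V_c{}^c, while R_{abc}{}^c = 0 and the double trace R_{ab}{}^{ab} = 0. -/

import Mathlib

/-- Traces of the curvature `R_{ab} = k_a k_b α_c θ̃^c∧k♭ + 2V_{c[a}k_{b]} θ̃^c∧k♭`
of the restricted connection, in the gauge basis (anholonomic metric `ga`, its own
inverse): writing `R a b x y` for the component `R_{x y a b}` (first two indices the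
2-form indices), one has `R_{acb}{}^c = V k_a k_b`, `R_{ac}{}^c{}_b = -V k_a k_b`
with `V = V_c{}^c`, while `R_{abc}{}^c = 0` and `R_{ab}{}^{ab} = 0`. -/
theorem stmt_19 {n : ℕ}
    (ga : Fin (n + 2) → Fin (n + 2) → ℝ)
    (hga : ∀ a b, ga a b =
      if a = 0 then (if b = 1 then 1 else 0)
      else if a = 1 then (if b = 0 then 1 else 0)
      else (if b = a then -1 else 0))
    (k l : Fin (n + 2) → ℝ)
    (hk : ∀ a, k a = if a = 0 then 1 else 0)
    (hl : ∀ a, l a = if a = 1 then 1 else 0)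
    (θ : Fin (n + 2) → Fin (n + 2) → ℝ)
    (hθ : ∀ c x, θ c x = if c = x ∧ 2 ≤ (c : ℕ) then 1 else 0)
    (al : Fin (n + 2) → ℝ) (hal : ∀ c : Fin (n + 2), (c : ℕ) < 2 → al c = 0)
    (Vt : Fin (n + 2) → Fin (n + 2) → ℝ)
    (hVt : ∀ c a : Fin (n + 2), ((c : ℕ) < 2 ∨ (a : ℕ) < 2) → Vt c a = 0)
    (V : ℝ) (hV : V = ∑ c, ∑ d, ga c d * Vt c d)
    (R : Fin (n + 2) → Fin (n + 2) → Fin (n + 2) → Fin (n + 2) → ℝ)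
    (hR : ∀ a b x y, R a b x y =
      k a * k b * ∑ c, al c * (θ c x * k y - θ c y * k x) +
      ∑ c, (Vt c a * k b - Vt c b * k a) * (θ c x * k y - θ c y * k x)) :
    (∀ a b, ∑ c, ∑ d, ga c d * R b d a c = V * k a * k b) ∧
    (∀ a b, ∑ c, ∑ d, ga c d * R d b a c = -(V * k a * k b)) ∧
    (∀ a b, ∑ c, ∑ d, ga c d * R c d a b = 0) ∧
    (∑ a, ∑ b, ∑ c, ∑ d, ga a c * ga b d * R c d a b = 0) := by
  have hal' : ∀ c : Fin (n+2), (c:ℕ) < 2 → al c = 0 := by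
    intro c hc; exact hal c hc
  have hVt' : ∀ c a : Fin (n+2), ((c:ℕ) < 2 ∨ (a:ℕ) < 2) → Vt c a = 0 := by
    intro c a hc
    exact hVt c a hc
  have key : ∀ (f : Fin (n+2) → ℝ), (∀ c : Fin (n+2), (c:ℕ) < 2 → f c = 0) →
      ∀ z, ∑ c, f c * θ c z = f z := by
    intro f hf z
    rw [Finset.sum_eq_single z]
    · by_cases h : 2 ≤ (z : ℕ)
      · simp [hθ, h]
      · rw [hf z (by omega)]; simp [hθ, h]
    · intro c _ hc
      simp [hθ, hc]
    · simp
  have key2 : ∀ (f : Fin (n+2) → ℝ), (∀ c : Fin (n+2), (c:ℕ) < 2 → f c = 0) →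
      ∀ x y, ∑ c, f c * (θ c x * k y - θ c y * k x) = f x * k y - f y * k x := by
    intro f hf x y
    have e : ∀ c, f c * (θ c x * k y - θ c y * k x)
        = (f c * θ c x) * k y - (f c * θ c y) * k x := by intro c; ring
    simp only [e, Finset.sum_sub_distrib, ← Finset.sum_mul, key f hf]
  have hR' : ∀ a b x y, R a b x y =
      k a * k b * (al x * k y - al y * k x) +
      ((Vt x a * k b - Vt x b * k a) * k y - (Vt y a * k b - Vt y b * k a) * k x) := by
    intro a b x y
    rw [hR, key2 al hal', key2 (fun c => Vt c a * k b - Vt c b * k a)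
      (fun c hc => by rw [hVt' c a (Or.inl hc), hVt' c b (Or.inl hc)]; ring)]
  have h01 : ((0:Fin (n+2)) : ℕ) = 0 := rfl
  have h11 : ((1:Fin (n+2)) : ℕ) = 1 := by simp
  have hne : (0:Fin (n+2)) ≠ 1 := by simp [Fin.ext_iff]
  have hVt01 : Vt 0 1 = 0 := hVt' 0 1 (Or.inl (by omega))
  have hVt10 : Vt 1 0 = 0 := hVt' 1 0 (Or.inr (by omega))
  have hVta1 : ∀ a, Vt a 1 = 0 := fun a => hVt' a 1 (Or.inr (by simp [h11]))
  have hVt1a : ∀ a, Vt 1 a = 0 := fun a => hVt' 1 a (Or.inl (by simp [h11]))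
  have hVta0 : ∀ a, Vt a 0 = 0 := fun a => hVt' a 0 (Or.inr (by simp))
  have hVt0a : ∀ a, Vt 0 a = 0 := fun a => hVt' 0 a (Or.inl (by simp))
  have hal0 : al 0 = 0 := hal' 0 (by omega)
  have hal1 : al 1 = 0 := hal' 1 (by simp [h11])
  have clean : ∀ (f g : Fin (n+2) → ℝ), f 1 = 0 →
      (∑ x, if x = 0 then (0:ℝ) else if x = 1 then f x else if 0 = x then g x else 0) = 0 := by
    intro f g hf1
    apply Finset.sum_eq_zero
    intro x _
    split_ifs with h1 h2 h3
    · rfl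
    · rw [h2, hf1]
    · exact absurd h3.symm h1
    · rfl
  subst hV
  refine ⟨?_, ?_, ?_, ?_⟩
  · intro a b
    simp only [hR', hk, hga, mul_ite, ite_mul, mul_one, one_mul, mul_zero, zero_mul,
      mul_sub, sub_mul, mul_add, add_mul, Finset.sum_sub_distrib, Finset.sum_add_distrib,
      Finset.sum_ite_eq', Finset.sum_ite_eq, Finset.sum_ite_irrel, Finset.mem_univ, if_true,
      hVta1, hVt1a, hVta0, hVt0a, hal0, hal1, sub_zero, zero_sub, neg_zero,
      Finset.sum_const_zero, add_zero, zero_add]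
    simp only [hne, Ne.symm hne, if_false, if_true, eq_self_iff_true, hal0, hal1, hVt01, hVt10, neg_zero, sub_zero, zero_sub, add_zero, zero_add, Finset.sum_const_zero]
    rw [clean al (fun x => -1 * al x) hal1, clean (fun x => Vt x b) (fun x => -1 * Vt x b) (hVt1a b)]
    by_cases ha : a = 0 <;> by_cases hb : b = 0 <;> simp [ha, hb]
  · intro a b
    simp only [hR', hk, hga, mul_ite, ite_mul, mul_one, one_mul, mul_zero, zero_mul,
      mul_sub, sub_mul, mul_add, add_mul, Finset.sum_sub_distrib, Finset.sum_add_distrib,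
      Finset.sum_ite_eq', Finset.sum_ite_eq, Finset.sum_ite_irrel, Finset.mem_univ, if_true,
      hVta1, hVt1a, hVta0, hVt0a, hal0, hal1, sub_zero, zero_sub, neg_zero,
      Finset.sum_const_zero, add_zero, zero_add]
    simp only [hne, Ne.symm hne, if_false, if_true, eq_self_iff_true, hal0, hal1, hVt01, hVt10, neg_zero, sub_zero, zero_sub, add_zero, zero_add, Finset.sum_const_zero]
    rw [clean al (fun x => -1 * al x) hal1, clean (fun x => Vt x b) (fun x => -1 * Vt x b) (hVt1a b)]
    by_cases ha : a = 0 <;> by_cases hb : b = 0 <;> simp [ha, hb]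
  · intro a b
    simp only [hR', hk, hga, mul_ite, ite_mul, mul_one, one_mul, mul_zero, zero_mul,
      mul_sub, sub_mul, mul_add, add_mul, Finset.sum_sub_distrib, Finset.sum_add_distrib,
      Finset.sum_ite_eq', Finset.sum_ite_eq, Finset.sum_ite_irrel, Finset.mem_univ, if_true,
      hVta1, hVt1a, hVta0, hVt0a, hal0, hal1, sub_zero, zero_sub, neg_zero,
      Finset.sum_const_zero, add_zero, zero_add]
    simp only [hne, Ne.symm hne, if_false, if_true, eq_self_iff_true, hal0, hal1, hVt01, hVt10, neg_zero, sub_zero, zero_sub, add_zero, zero_add, Finset.sum_const_zero]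
    rw [clean (fun x => Vt a x) (fun x => -1 * Vt a x) (hVta1 a), clean (fun x => Vt b x) (fun x => -1 * Vt b x) (hVta1 b)]
    by_cases ha : a = 0 <;> by_cases hb : b = 0 <;> simp [ha, hb]
  ·
    simp only [hR', hk, hga, mul_ite, ite_mul, mul_one, one_mul, mul_zero, zero_mul,
      mul_sub, sub_mul, mul_add, add_mul, Finset.sum_sub_distrib, Finset.sum_add_distrib,
      Finset.sum_ite_eq', Finset.sum_ite_eq, Finset.sum_ite_irrel, Finset.mem_univ, if_true,
      hVta1, hVt1a, hVta0, hVt0a, hal0, hal1, sub_zero, zero_sub, neg_zero,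
      Finset.sum_const_zero, add_zero, zero_add]
    simp only [hne, Ne.symm hne, if_false, if_true, eq_self_iff_true, hal0, hal1, hVt01, hVt10, neg_zero, sub_zero, zero_sub, add_zero, zero_add, Finset.sum_const_zero]
    simp [ite_self]
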